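/- Let φ : (0, μ(R)) → (0, ∞) be admissible with least quasiconcave majorant ψ. Then for every measurable function f, sup_{t∈(0,μ(R))} φ(t) f**(t) = sup_{t∈(0,μ(R))} ψ(t) f**(t), i.e., ‖f‖_{M_φ} = ‖f‖_{M_ψ}. -/

import Mathlib

open MeasureTheory Set
open scoped ENNReal

/-- The nonincreasing rearrangement `f*(t) = inf {λ > 0 : μ{|f| > λ} ≤ t}`. -/
noncomputable def rearr {α : Type*} [MeasurableSpace α] (μ : Measure α) (f : α → ℝ) (t : ℝ) :
    ℝ≥0∞ :=
  sInf {l : ℝ≥0∞ | μ {x | l < ENNReal.ofReal |f x|} ≤ ENNReal.ofReal t}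

/-- The maximal nonincreasing rearrangement `f**(t) = (1/t) ∫₀ᵗ f*(s) ds`. -/
noncomputable def maxRearr {α : Type*} [MeasurableSpace α] (μ : Measure α) (f : α → ℝ) (t : ℝ) :
    ℝ≥0∞ :=
  (∫⁻ s in Set.Ioo (0 : ℝ) t, rearr μ f s) / ENNReal.ofReal t

/-- The least quasiconcave majorant
`ψ(t) = t · sup_{s ∈ [t, L)} (sup_{τ ∈ (0, s]} φ(τ)) / s`. -/
noncomputable def lqm (L : ℝ≥0∞) (φ : ℝ → ℝ) (t : ℝ) : ℝ≥0∞ :=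
  ENNReal.ofReal t *
    ⨆ (s : ℝ) (_ : t ≤ s) (_ : ENNReal.ofReal s < L),
      (⨆ (τ : ℝ) (_ : 0 < τ) (_ : τ ≤ s), ENNReal.ofReal (φ τ)) / ENNReal.ofReal s

/-- For admissible `φ` with least quasiconcave majorant `ψ`, `‖f‖_{M_φ} = ‖f‖_{M_ψ}`
for every measurable function `f`. -/
lemma rearr_antitone {α : Type*} [MeasurableSpace α] (μ : Measure α) (f : α → ℝ) :
    Antitone (rearr μ f) := fun a b hab =>
  sInf_le_sInf fun l hl => le_trans hl (ENNReal.ofReal_le_ofReal hab)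

/-- `τ * ∫₀ˢ f* ≤ s * ∫₀^τ f*` for `0 < τ ≤ s`. -/
lemma key_ineq {α : Type*} [MeasurableSpace α] (μ : Measure α) (f : α → ℝ) {τ s : ℝ}
    (hτ : 0 < τ) (hτs : τ ≤ s) :
    ENNReal.ofReal τ * ∫⁻ x in Set.Ioo (0 : ℝ) s, rearr μ f x ≤
      ENNReal.ofReal s * ∫⁻ x in Set.Ioo (0 : ℝ) τ, rearr μ f x := by
  set g := rearr μ f with hg
  have hsplit : Set.Ioo (0 : ℝ) s = Set.Ioo (0 : ℝ) τ ∪ Set.Ico τ s := by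
    rw [Set.Ioo_union_Ico_eq_Ioo hτ hτs]
  have hdis : Disjoint (Set.Ioo (0 : ℝ) τ) (Set.Ico τ s) := by
    apply Set.disjoint_left.2
    rintro x ⟨_, h2⟩ ⟨h3, _⟩; linarith
  have hunion : (∫⁻ x in Set.Ioo (0 : ℝ) s, g x) =
      (∫⁻ x in Set.Ioo (0 : ℝ) τ, g x) + ∫⁻ x in Set.Ico τ s, g x := by
    rw [hsplit, lintegral_union measurableSet_Ico hdis]
  have hupper : (∫⁻ x in Set.Ico τ s, g x) ≤ g τ * ENNReal.ofReal (s - τ) := by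
    calc (∫⁻ x in Set.Ico τ s, g x) ≤ ∫⁻ _ in Set.Ico τ s, g τ :=
          setLIntegral_mono' measurableSet_Ico fun x hx => rearr_antitone μ f hx.1
      _ = g τ * ENNReal.ofReal (s - τ) := by rw [setLIntegral_const, Real.volume_Ico]
  have hlower : g τ * ENNReal.ofReal τ ≤ ∫⁻ x in Set.Ioo (0 : ℝ) τ, g x := by
    calc g τ * ENNReal.ofReal τ = ∫⁻ _ in Set.Ioo (0 : ℝ) τ, g τ := by
          rw [setLIntegral_const, Real.volume_Ioo, sub_zero]
      _ ≤ ∫⁻ x in Set.Ioo (0 : ℝ) τ, g x :=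
          setLIntegral_mono' measurableSet_Ioo fun x hx => rearr_antitone μ f hx.2.le
  set A := ∫⁻ x in Set.Ioo (0 : ℝ) τ, g x with hA
  set B := ∫⁻ x in Set.Ico τ s, g x with hB
  calc ENNReal.ofReal τ * ∫⁻ x in Set.Ioo (0 : ℝ) s, g x
      = ENNReal.ofReal τ * A + ENNReal.ofReal τ * B := by rw [hunion]; ring
    _ ≤ ENNReal.ofReal τ * A + ENNReal.ofReal (s - τ) * (g τ * ENNReal.ofReal τ) := by
        refine add_le_add le_rfl ?_
        calc ENNReal.ofReal τ * B ≤ ENNReal.ofReal τ * (g τ * ENNReal.ofReal (s - τ)) := by gcongr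
          _ = ENNReal.ofReal (s - τ) * (g τ * ENNReal.ofReal τ) := by ring
    _ ≤ ENNReal.ofReal τ * A + ENNReal.ofReal (s - τ) * A := by gcongr
    _ = ENNReal.ofReal s * A := by
        rw [← add_mul, ← ENNReal.ofReal_add hτ.le (by linarith : (0:ℝ) ≤ s - τ)]
        ring_nf

lemma maxRearr_anti {α : Type*} [MeasurableSpace α] (μ : Measure α) (f : α → ℝ) {τ s : ℝ}
    (hτ : 0 < τ) (hτs : τ ≤ s) : maxRearr μ f s ≤ maxRearr μ f τ := by
  have hs : 0 < s := lt_of_lt_of_le hτ hτs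
  have hτ0 : ENNReal.ofReal τ ≠ 0 := by simp [hτ]
  have hτt : ENNReal.ofReal τ ≠ ⊤ := ENNReal.ofReal_ne_top
  have hs0 : ENNReal.ofReal s ≠ 0 := by simp [hs]
  have hst : ENNReal.ofReal s ≠ ⊤ := ENNReal.ofReal_ne_top
  have hrw : (∫⁻ x in Set.Ioo (0 : ℝ) τ, rearr μ f x) / ENNReal.ofReal τ * ENNReal.ofReal s =
      (∫⁻ x in Set.Ioo (0 : ℝ) τ, rearr μ f x) * ENNReal.ofReal s / ENNReal.ofReal τ := by
    rw [ENNReal.div_eq_inv_mul, ENNReal.div_eq_inv_mul]; ring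
  rw [maxRearr, maxRearr, ENNReal.div_le_iff hs0 hst, hrw,
    ENNReal.le_div_iff_mul_le (Or.inl hτ0) (Or.inl hτt)]
  calc (∫⁻ x in Set.Ioo (0 : ℝ) s, rearr μ f x) * ENNReal.ofReal τ
      = ENNReal.ofReal τ * ∫⁻ x in Set.Ioo (0 : ℝ) s, rearr μ f x := by ring
    _ ≤ ENNReal.ofReal s * ∫⁻ x in Set.Ioo (0 : ℝ) τ, rearr μ f x := key_ineq μ f hτ hτs
    _ = (∫⁻ x in Set.Ioo (0 : ℝ) τ, rearr μ f x) * ENNReal.ofReal s := by ring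

lemma mul_maxRearr {α : Type*} [MeasurableSpace α] (μ : Measure α) (f : α → ℝ) {t : ℝ}
    (ht : 0 < t) :
    ENNReal.ofReal t * maxRearr μ f t = ∫⁻ x in Set.Ioo (0 : ℝ) t, rearr μ f x := by
  rw [maxRearr, ENNReal.mul_div_cancel (by simp [ht]) ENNReal.ofReal_ne_top]

theorem MNorm_lqm_eq {α : Type*} [MeasurableSpace α] (μ : Measure α) [SigmaFinite μ]
    [NullSingletonClass μ] (hμ : 0 < μ Set.univ)
    (φ : ℝ → ℝ)
    (hpos : ∀ t : ℝ, 0 < t → ENNReal.ofReal t < μ Set.univ → 0 < φ t)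
    (hadm : ∀ t : ℝ, 0 < t → ENNReal.ofReal t < μ Set.univ → lqm (μ Set.univ) φ t < ⊤)
    (f : α → ℝ) (hf : Measurable f) :
    (⨆ (t : ℝ) (_ : 0 < t) (_ : ENNReal.ofReal t < μ Set.univ),
        ENNReal.ofReal (φ t) * maxRearr μ f t) =
      ⨆ (t : ℝ) (_ : 0 < t) (_ : ENNReal.ofReal t < μ Set.univ),
        lqm (μ Set.univ) φ t * maxRearr μ f t := by
  set L := μ Set.univ
  apply le_antisymm
  · -- φ ≤ ψ pointwise
    refine iSup_le fun t => iSup_le fun ht => iSup_le fun htL => ?_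
    have hφψ : ENNReal.ofReal (φ t) ≤ lqm L φ t := by
      have h1 : ENNReal.ofReal (φ t) ≤
          ⨆ (τ : ℝ) (_ : 0 < τ) (_ : τ ≤ t), ENNReal.ofReal (φ τ) :=
        le_iSup₂_of_le t ht (le_iSup_of_le le_rfl le_rfl)
      have h2 : (⨆ (τ : ℝ) (_ : 0 < τ) (_ : τ ≤ t), ENNReal.ofReal (φ τ)) / ENNReal.ofReal t ≤
          ⨆ (s : ℝ) (_ : t ≤ s) (_ : ENNReal.ofReal s < L),
            (⨆ (τ : ℝ) (_ : 0 < τ) (_ : τ ≤ s), ENNReal.ofReal (φ τ)) / ENNReal.ofReal s :=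
        le_iSup₂_of_le t le_rfl (le_iSup_of_le htL le_rfl)
      calc ENNReal.ofReal (φ t)
          = ENNReal.ofReal t * (ENNReal.ofReal (φ t) / ENNReal.ofReal t) := by
            rw [ENNReal.mul_div_cancel (by simp [ht]) ENNReal.ofReal_ne_top]
        _ ≤ ENNReal.ofReal t *
            ((⨆ (τ : ℝ) (_ : 0 < τ) (_ : τ ≤ t), ENNReal.ofReal (φ τ)) / ENNReal.ofReal t) := by
            gcongr
        _ ≤ lqm L φ t := by rw [lqm]; gcongr
    refine le_trans (mul_le_mul_left hφψ _) ?_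
    exact le_iSup₂_of_le t ht (le_iSup_of_le htL le_rfl)
  · refine iSup_le fun t => iSup_le fun ht => iSup_le fun htL => ?_
    rw [lqm, mul_comm (ENNReal.ofReal t), mul_assoc, mul_maxRearr μ f ht,
      ENNReal.iSup_mul]
    refine iSup_le fun s => ?_
    rw [ENNReal.iSup_mul]
    refine iSup_le fun hts => ?_
    rw [ENNReal.iSup_mul]
    refine iSup_le fun hsL => ?_
    have hs : 0 < s := lt_of_lt_of_le ht hts
    have hs0 : ENNReal.ofReal s ≠ 0 := by simp [hs]
    have hst : ENNReal.ofReal s ≠ ⊤ := ENNReal.ofReal_ne_top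
    rw [ENNReal.div_eq_inv_mul, mul_assoc, ENNReal.iSup_mul, ENNReal.mul_iSup]
    refine iSup_le fun τ => ?_
    rw [ENNReal.iSup_mul, ENNReal.mul_iSup]
    refine iSup_le fun hτ => ?_
    rw [ENNReal.iSup_mul, ENNReal.mul_iSup]
    refine iSup_le fun hτs => ?_
    have step : (ENNReal.ofReal s)⁻¹ *
        (ENNReal.ofReal (φ τ) * ∫⁻ x in Set.Ioo (0 : ℝ) t, rearr μ f x) ≤
        ENNReal.ofReal (φ τ) * maxRearr μ f τ := by
      calc (ENNReal.ofReal s)⁻¹ *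
            (ENNReal.ofReal (φ τ) * ∫⁻ x in Set.Ioo (0 : ℝ) t, rearr μ f x)
          = ENNReal.ofReal (φ τ) *
            ((∫⁻ x in Set.Ioo (0 : ℝ) t, rearr μ f x) / ENNReal.ofReal s) := by
            rw [ENNReal.div_eq_inv_mul]; ring
        _ ≤ ENNReal.ofReal (φ τ) * maxRearr μ f s := by
            gcongr
            rw [maxRearr]
            gcongr
        _ ≤ ENNReal.ofReal (φ τ) * maxRearr μ f τ := by
            gcongr; exact maxRearr_anti μ f hτ hτs
    refine le_trans step ?_
    have hτL : ENNReal.ofReal τ < L :=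
      lt_of_le_of_lt (ENNReal.ofReal_le_ofReal hτs) hsL
    exact le_iSup₂_of_le τ hτ (le_iSup_of_le hτL le_rfl)
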